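/- Let W = (w_{ij}) ∈ ℝ^{n×n} be a nonnegative, symmetric, doubly stochastic matrix with eigenvalues 1 = λ₁ > λ₂ ≥ ⋯ ≥ λ_n and ρ := max{|λ₂|, |λ_n|} < 1. Let t_1, …, t_n, d_1, …, d_n, d_1⁺, …, d_n⁺ ∈ ℝ^d and define the gradient-tracking update t_i⁺ := Σ_{j=1}^n w_{ij} t_j + d_i⁺ − d_i, with averages t̄ := (1/n)Σ_i t_i and t̄⁺ := (1/n)Σ_i t_i⁺. Then Σ_{i=1}^n ‖t_i⁺ − t̄⁺‖² ≤ ρ Σ_{i=1}^n ‖t_i − t̄‖² + (1/(1 − ρ)) Σ_{i=1}^n ‖d_i⁺ − d_i‖². -/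

import Mathlib

open Matrix

lemma dot_pres {n : ℕ} {P : Matrix (Fin n) (Fin n) ℝ} (hP : P * Pᵀ = 1)
    (v w : Fin n → ℝ) : (Pᵀ *ᵥ v) ⬝ᵥ (Pᵀ *ᵥ w) = v ⬝ᵥ w := by
  rw [Matrix.dotProduct_mulVec, ← Matrix.mulVec_transpose Pᵀ, Matrix.transpose_transpose,
      Matrix.mulVec_mulVec, hP, Matrix.one_mulVec]

lemma dot_presP {n : ℕ} {P : Matrix (Fin n) (Fin n) ℝ} (hQP : Pᵀ * P = 1)
    (v w : Fin n → ℝ) : (P *ᵥ v) ⬝ᵥ (P *ᵥ w) = v ⬝ᵥ w := by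
  rw [Matrix.dotProduct_mulVec, ← Matrix.mulVec_transpose P,
      Matrix.mulVec_mulVec, hQP, Matrix.one_mulVec]

lemma sum_sq_eq_dot {n : ℕ} (v : Fin n → ℝ) : ∑ i, (v i) ^ 2 = v ⬝ᵥ v := by
  simp [dotProduct, sq]

lemma spectral_sq {n : ℕ} (hn : 2 ≤ n)
    (W : Matrix (Fin n) (Fin n) ℝ)
    (hW_rows : ∀ i, ∑ j, W i j = 1)
    (lam : Fin n → ℝ) (P : Matrix (Fin n) (Fin n) ℝ)
    (hP : P * Pᵀ = 1)
    (hdiag : W = P * Matrix.diagonal lam * Pᵀ)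
    (hgap : lam ⟨1, Nat.lt_of_lt_of_le one_lt_two hn⟩ < 1)
    (hmono : Antitone lam)
    (ρ : ℝ)
    (hρdef : ρ = max |lam ⟨1, Nat.lt_of_lt_of_le one_lt_two hn⟩| |lam ⟨n - 1, Nat.sub_lt (Nat.lt_of_lt_of_le two_pos hn) one_pos⟩|)
    (y : Fin n → ℝ) (hy : ∑ i, y i = 0) :
    ∑ i, ((W *ᵥ y) i) ^ 2 ≤ ρ ^ 2 * ∑ i, (y i) ^ 2 := by
  have hQP : Pᵀ * P = 1 := mul_eq_one_comm.mp hP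
  have hρ0 : 0 ≤ ρ := by
    rw [hρdef]; exact le_trans (abs_nonneg _) (le_max_left _ _)
  set z : Fin n → ℝ := Pᵀ *ᵥ y with hz
  set o : Fin n → ℝ := fun _ => 1 with ho
  set z' : Fin n → ℝ := Pᵀ *ᵥ o with hz'
  have hWo : W *ᵥ o = o := by
    funext i; simp [Matrix.mulVec, dotProduct, ho, hW_rows i]
  have hDz' : ∀ i, lam i * z' i = z' i := by
    intro i
    have h1 : Pᵀ *ᵥ (W *ᵥ o) = Matrix.diagonal lam *ᵥ z' := by
      rw [Matrix.mulVec_mulVec, hdiag,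
        show Pᵀ * (P * Matrix.diagonal lam * Pᵀ) = Matrix.diagonal lam * Pᵀ by
          rw [← Matrix.mul_assoc, ← Matrix.mul_assoc, hQP, Matrix.one_mul],
        ← Matrix.mulVec_mulVec]
    rw [hWo] at h1
    have h2 := congrFun h1.symm i
    rwa [Matrix.mulVec_diagonal] at h2
  -- eigenvalue bound away from index 0
  have hlam_le : ∀ i : Fin n, i ≠ ⟨0, by omega⟩ → |lam i| ≤ ρ := by
    intro i hi
    have hi1 : 1 ≤ i.val := by
      by_contra h
      exact hi (Fin.ext (by simp only [Fin.val_mk]; omega))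
    have hle1 : lam i ≤ lam ⟨1, by omega⟩ := hmono (by rw [Fin.le_def]; exact hi1)
    have hle2 : lam ⟨n - 1, by omega⟩ ≤ lam i :=
      hmono (by rw [Fin.le_def]; simp; omega)
    rw [abs_le]
    constructor
    · have : -ρ ≤ -|lam ⟨n - 1, by omega⟩| := by
        simp only [neg_le_neg_iff]
        rw [hρdef]; exact le_max_right _ _
      calc -ρ ≤ -|lam ⟨n - 1, by omega⟩| := this
        _ ≤ lam ⟨n - 1, by omega⟩ := neg_abs_le _
        _ ≤ lam i := hle2
    · calc lam i ≤ lam ⟨1, by omega⟩ := hle1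
        _ ≤ |lam ⟨1, by omega⟩| := le_abs_self _
        _ ≤ ρ := by rw [hρdef]; exact le_max_left _ _
  have hz'0 : ∀ i : Fin n, i ≠ ⟨0, by omega⟩ → z' i = 0 := by
    intro i hi
    have hi1 : 1 ≤ i.val := by
      by_contra h
      exact hi (Fin.ext (by simp only [Fin.val_mk]; omega))
    have hle1 : lam i ≤ lam ⟨1, by omega⟩ := hmono (by rw [Fin.le_def]; exact hi1)
    have hne : lam i ≠ 1 := by intro h; rw [h] at hle1; linarith
    have h2 := hDz' i
    have h3 : (lam i - 1) * z' i = 0 := by ring_nf; linarith [h2]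
    rcases mul_eq_zero.mp h3 with h | h
    · exact absurd (by linarith : lam i = 1) hne
    · exact h
  have hz'sq : z' ⟨0, by omega⟩ * z' ⟨0, by omega⟩ = n := by
    have h1 : z' ⬝ᵥ z' = o ⬝ᵥ o := dot_pres hP o o
    have h2 : o ⬝ᵥ o = n := by simp [dotProduct, ho]
    have h3 : z' ⬝ᵥ z' = z' ⟨0, by omega⟩ * z' ⟨0, by omega⟩ := by
      rw [dotProduct]
      rw [Finset.sum_eq_single (⟨0, by omega⟩ : Fin n)]
      · intro b _ hb
        rw [hz'0 b hb]; ring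
      · intro h; exact absurd (Finset.mem_univ _) h
    rw [← h3, h1, h2]
  have hz0 : z ⟨0, by omega⟩ = 0 := by
    have h1 : z' ⬝ᵥ z = o ⬝ᵥ y := dot_pres hP o y
    have h2 : o ⬝ᵥ y = 0 := by simpa [dotProduct, ho] using hy
    have h3 : z' ⬝ᵥ z = z' ⟨0, by omega⟩ * z ⟨0, by omega⟩ := by
      rw [dotProduct]
      rw [Finset.sum_eq_single (⟨0, by omega⟩ : Fin n)]
      · intro b _ hb
        rw [hz'0 b hb]; ring
      · intro h; exact absurd (Finset.mem_univ _) h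
    have h4 : z' ⟨0, by omega⟩ * z ⟨0, by omega⟩ = 0 := by rw [← h3, h1, h2]
    have h5 : z' ⟨0, by omega⟩ ≠ 0 := by
      intro h
      rw [h, zero_mul] at hz'sq
      have hpos : (0:ℝ) < n := by exact_mod_cast (by omega : 0 < n)
      linarith [hz'sq]
    exact (mul_eq_zero.mp h4).resolve_left h5
  -- main computation
  have hWy : W *ᵥ y = P *ᵥ (Matrix.diagonal lam *ᵥ z) := by
    rw [hz, Matrix.mulVec_mulVec, Matrix.mulVec_mulVec, hdiag]
  have hsum1 : ∑ i, ((W *ᵥ y) i) ^ 2 = ∑ i, (lam i * z i) ^ 2 := by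
    rw [sum_sq_eq_dot, hWy, dot_presP hQP]
    rw [sum_sq_eq_dot]
    congr 1 <;> (funext i; rw [Matrix.mulVec_diagonal])
  have hsum2 : ∑ i, (z i) ^ 2 = ∑ i, (y i) ^ 2 := by
    rw [sum_sq_eq_dot, sum_sq_eq_dot, hz, dot_pres hP]
  rw [hsum1, ← hsum2, Finset.mul_sum]
  apply Finset.sum_le_sum
  intro i _
  by_cases hi : i = ⟨0, by omega⟩
  · rw [hi, hz0]
    simp
  · have h1 : |lam i| ≤ ρ := hlam_le i hi
    have h2 : lam i ^ 2 ≤ ρ ^ 2 := sq_le_sq' (abs_le.mp h1).1 (abs_le.mp h1).2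
    calc (lam i * z i) ^ 2 = lam i ^ 2 * z i ^ 2 := by ring
      _ ≤ ρ ^ 2 * z i ^ 2 := by nlinarith [sq_nonneg (z i)]

lemma euclid_norm_sq {m : ℕ} (v : EuclideanSpace ℝ (Fin m)) :
    ‖v‖ ^ 2 = ∑ k, (v k) ^ 2 := by
  rw [EuclideanSpace.norm_eq, Real.sq_sqrt (by positivity)]
  simp [Real.norm_eq_abs, sq_abs]

lemma spectral_vec {n m : ℕ} (hn : 2 ≤ n)
    (W : Matrix (Fin n) (Fin n) ℝ)
    (hW_rows : ∀ i, ∑ j, W i j = 1)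
    (lam : Fin n → ℝ) (P : Matrix (Fin n) (Fin n) ℝ)
    (hP : P * Pᵀ = 1)
    (hdiag : W = P * Matrix.diagonal lam * Pᵀ)
    (hgap : lam ⟨1, Nat.lt_of_lt_of_le one_lt_two hn⟩ < 1)
    (hmono : Antitone lam)
    (ρ : ℝ)
    (hρdef : ρ = max |lam ⟨1, Nat.lt_of_lt_of_le one_lt_two hn⟩| |lam ⟨n - 1, Nat.sub_lt (Nat.lt_of_lt_of_le two_pos hn) one_pos⟩|)
    (x : Fin n → EuclideanSpace ℝ (Fin m)) (hx : ∑ i, x i = 0) :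
    ∑ i, ‖(∑ j, W i j • x j : EuclideanSpace ℝ (Fin m))‖ ^ 2
      ≤ ρ ^ 2 * ∑ i, ‖x i‖ ^ 2 := by
  have key : ∀ i k, (∑ j, W i j • x j : EuclideanSpace ℝ (Fin m)) k
      = (W *ᵥ (fun j => x j k)) i := by
    intro i k
    rw [WithLp.ofLp_sum, Finset.sum_apply]
    rfl
  calc ∑ i, ‖(∑ j, W i j • x j : EuclideanSpace ℝ (Fin m))‖ ^ 2
      = ∑ k, ∑ i, ((W *ᵥ (fun j => x j k)) i) ^ 2 := by
        simp_rw [euclid_norm_sq, key]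
        rw [Finset.sum_comm]
    _ ≤ ∑ k, ρ ^ 2 * ∑ i, (x i k) ^ 2 := by
        apply Finset.sum_le_sum
        intro k _
        apply spectral_sq hn W hW_rows lam P hP hdiag hgap hmono ρ hρdef
        rw [← Finset.sum_apply k Finset.univ fun i => x i, ← WithLp.ofLp_sum, hx]
        rfl
    _ = ρ ^ 2 * ∑ i, ‖x i‖ ^ 2 := by
        rw [← Finset.mul_sum]
        congr 1
        rw [Finset.sum_comm]
        exact Finset.sum_congr rfl fun i _ => (euclid_norm_sq (x i)).symm

lemma variance_le {n : ℕ} (hn : 0 < n) (a : Fin n → ℝ) :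
    ∑ i, (a i - (n : ℝ)⁻¹ * ∑ j, a j) ^ 2 ≤ ∑ i, (a i) ^ 2 := by
  set s := ∑ j, a j with hs
  set c := (n : ℝ)⁻¹ * s with hc
  have hexp : ∀ i, (a i - c) ^ 2 = a i ^ 2 - (2 * c) * a i + c ^ 2 := by
    intro i; ring
  have hsum : ∑ i, (a i - c) ^ 2 = (∑ i, a i ^ 2) - 2 * c * s + n * c ^ 2 := by
    simp_rw [hexp]
    rw [Finset.sum_add_distrib, Finset.sum_sub_distrib, ← Finset.mul_sum,
        Finset.sum_const, Finset.card_univ, Fintype.card_fin, nsmul_eq_mul, ← hs]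
  have hn' : (0 : ℝ) < n := by exact_mod_cast hn
  have h1 : (n : ℝ) * (n : ℝ)⁻¹ = 1 := mul_inv_cancel₀ (ne_of_gt hn')
  have h2 : (0 : ℝ) ≤ (n : ℝ)⁻¹ := by positivity
  rw [hsum, hc]
  nlinarith [sq_nonneg s, mul_nonneg h2 (sq_nonneg s)]

lemma variance_vec {n m : ℕ} (hn : 0 < n) (e : Fin n → EuclideanSpace ℝ (Fin m)) :
    ∑ i, ‖e i - (n : ℝ)⁻¹ • ∑ l, e l‖ ^ 2 ≤ ∑ i, ‖e i‖ ^ 2 := by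
  have key : ∀ i k, (e i - (n : ℝ)⁻¹ • ∑ l, e l : EuclideanSpace ℝ (Fin m)) k
      = e i k - (n : ℝ)⁻¹ * ∑ l, e l k := by
    intro i k
    have h1 : (e i - (n : ℝ)⁻¹ • ∑ l, e l : EuclideanSpace ℝ (Fin m)) k
        = e i k - (n : ℝ)⁻¹ * (∑ l, e l) k := rfl
    rw [h1, WithLp.ofLp_sum, Finset.sum_apply]
  calc ∑ i, ‖e i - (n : ℝ)⁻¹ • ∑ l, e l‖ ^ 2
      = ∑ k, ∑ i, (e i k - (n : ℝ)⁻¹ * ∑ l, e l k) ^ 2 := by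
        simp_rw [euclid_norm_sq, key]
        rw [Finset.sum_comm]
    _ ≤ ∑ k, ∑ i, (e i k) ^ 2 := by
        apply Finset.sum_le_sum
        intro k _
        exact variance_le hn (fun i => e i k)
    _ = ∑ i, ‖e i‖ ^ 2 := by
        rw [Finset.sum_comm]
        exact Finset.sum_congr rfl fun i _ => (euclid_norm_sq (e i)).symm

set_option maxHeartbeats 1000000 in
/-- Consensus-error bound for the gradient-tracking update:
with `W` nonnegative, symmetric, doubly stochastic with spectral parameter
`ρ = max{|λ₂|, |λₙ|} < 1`, and `tᵢ⁺ = ∑ⱼ w_{ij} tⱼ + dᵢ⁺ − dᵢ`, we have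
`∑ ‖tᵢ⁺ − t̄⁺‖² ≤ ρ ∑ ‖tᵢ − t̄‖² + (1/(1−ρ)) ∑ ‖dᵢ⁺ − dᵢ‖²`. -/
theorem consensus_error_tracking_update {n m : ℕ} (hn : 2 ≤ n)
    (W : Matrix (Fin n) (Fin n) ℝ)
    (hW_nonneg : ∀ i j, 0 ≤ W i j)
    (hW_symm : W.IsSymm)
    (hW_rows : ∀ i, ∑ j, W i j = 1)
    (hW_cols : ∀ j, ∑ i, W i j = 1)
    (lam : Fin n → ℝ) (P : Matrix (Fin n) (Fin n) ℝ)
    (hP : P * Pᵀ = 1)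
    (hdiag : W = P * Matrix.diagonal lam * Pᵀ)
    (hlam0 : lam ⟨0, by omega⟩ = 1)
    (hgap : lam ⟨1, by omega⟩ < 1)
    (hmono : Antitone lam)
    (ρ : ℝ)
    (hρdef : ρ = max |lam ⟨1, by omega⟩| |lam ⟨n - 1, by omega⟩|)
    (hρlt : ρ < 1)
    (t d dplus : Fin n → EuclideanSpace ℝ (Fin m))
    (tplus : Fin n → EuclideanSpace ℝ (Fin m))
    (htplus : ∀ i, tplus i = (∑ j, W i j • t j) + dplus i - d i) :
    ∑ i, ‖tplus i - (n : ℝ)⁻¹ • ∑ l, tplus l‖ ^ 2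
      ≤ ρ * ∑ i, ‖t i - (n : ℝ)⁻¹ • ∑ l, t l‖ ^ 2
        + 1 / (1 - ρ) * ∑ i, ‖dplus i - d i‖ ^ 2 := by
  have h0n : 0 < n := by omega
  have hn' : (0 : ℝ) < n := by exact_mod_cast h0n
  set tbar : EuclideanSpace ℝ (Fin m) := (n : ℝ)⁻¹ • ∑ l, t l with htbar
  set e : Fin n → EuclideanSpace ℝ (Fin m) := fun i => dplus i - d i with he
  have hee : ∀ i, dplus i - d i = e i := fun i => rfl
  set ebar : EuclideanSpace ℝ (Fin m) := (n : ℝ)⁻¹ • ∑ l, e l with hebar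
  set x : Fin n → EuclideanSpace ℝ (Fin m) := fun i => t i - tbar with hx
  have hxi : ∀ i, x i = t i - tbar := fun i => rfl
  have hxsum : ∑ i, x i = 0 := by
    simp_rw [hxi]
    rw [Finset.sum_sub_distrib, Finset.sum_const, Finset.card_univ, Fintype.card_fin,
        ← Nat.cast_smul_eq_nsmul ℝ, htbar, smul_smul,
        mul_inv_cancel₀ (ne_of_gt hn'), one_smul, sub_self]
  have hcol : ∑ l, ∑ j, W l j • t j = ∑ j, t j := by
    rw [Finset.sum_comm]
    refine Finset.sum_congr rfl fun j _ => ?_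
    rw [← Finset.sum_smul, hW_cols j, one_smul]
  have hsum_tplus : ∑ l, tplus l = (∑ l, t l) + ∑ l, e l := by
    have hterm2 : ∀ l, tplus l = (∑ j, W l j • t j) + e l := by
      intro l
      rw [htplus l, he]
      abel
    simp_rw [hterm2]
    rw [Finset.sum_add_distrib, hcol]
  have hkey : ∀ i, tplus i - (n : ℝ)⁻¹ • ∑ l, tplus l
      = (∑ j, W i j • x j) + (e i - ebar) := by
    intro i
    have h1 : (∑ j, W i j • x j : EuclideanSpace ℝ (Fin m))
        = (∑ j, W i j • t j) - tbar := by
      simp_rw [hxi, smul_sub]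
      rw [Finset.sum_sub_distrib, ← Finset.sum_smul, hW_rows i, one_smul]
    rw [htplus i, hsum_tplus, h1, smul_add, ← htbar, ← hebar, ← hee i]
    abel
  set u : Fin n → EuclideanSpace ℝ (Fin m) := fun i => ∑ j, W i j • x j with hu
  set v : Fin n → EuclideanSpace ℝ (Fin m) := fun i => e i - ebar with hv
  have hU : ∑ i, ‖u i‖ ^ 2 ≤ ρ ^ 2 * ∑ i, ‖x i‖ ^ 2 :=
    spectral_vec hn W hW_rows lam P hP hdiag hgap hmono ρ hρdef x hxsum
  have hV : ∑ i, ‖v i‖ ^ 2 ≤ ∑ i, ‖e i‖ ^ 2 := variance_vec h0n e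
  have hLHS : ∑ i, ‖tplus i - (n : ℝ)⁻¹ • ∑ l, tplus l‖ ^ 2
      = ∑ i, ‖u i + v i‖ ^ 2 := by
    refine Finset.sum_congr rfl fun i _ => ?_
    rw [hkey i]
  have hRHSx : ∑ i, ‖t i - (n : ℝ)⁻¹ • ∑ l, t l‖ ^ 2 = ∑ i, ‖x i‖ ^ 2 := rfl
  have hRHSe : ∑ i, ‖dplus i - d i‖ ^ 2 = ∑ i, ‖e i‖ ^ 2 := rfl
  rw [hLHS, hRHSx, hRHSe]
  have hρ0 : 0 ≤ ρ := by
    rw [hρdef]; exact le_trans (abs_nonneg _) (le_max_left _ _)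
  have hxnn : (0:ℝ) ≤ ∑ i, ‖x i‖ ^ 2 := Finset.sum_nonneg fun i _ => by positivity
  have hunn : (0:ℝ) ≤ ∑ i, ‖u i‖ ^ 2 := Finset.sum_nonneg fun i _ => by positivity
  rcases eq_or_lt_of_le hρ0 with hρz | hρpos
  · -- ρ = 0
    have hUz : ∀ i ∈ Finset.univ, ‖u i‖ ^ 2 = 0 := by
      rw [← Finset.sum_eq_zero_iff_of_nonneg (fun i _ => by positivity)]
      have : ρ ^ 2 * ∑ i, ‖x i‖ ^ 2 = 0 := by rw [← hρz]; ring
      linarith [hU, hunn, this]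
    have hUz' : ∀ i, u i = 0 := by
      intro i
      have := hUz i (Finset.mem_univ i)
      have hn0 : ‖u i‖ = 0 := by
        nlinarith [norm_nonneg (u i)]
      exact norm_eq_zero.mp hn0
    have : ∑ i, ‖u i + v i‖ ^ 2 = ∑ i, ‖v i‖ ^ 2 := by
      refine Finset.sum_congr rfl fun i _ => ?_
      rw [hUz' i, zero_add]
    rw [this, ← hρz]
    simp only [zero_mul, zero_add, sub_zero]
    calc ∑ i, ‖v i‖ ^ 2 ≤ ∑ i, ‖e i‖ ^ 2 := hV
      _ = 1 / 1 * ∑ i, ‖e i‖ ^ 2 := by ring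
  · -- ρ > 0
    have h1ρ : 0 < 1 - ρ := by linarith
    set c : ℝ := (1 - ρ) / ρ with hc
    have hcpos : 0 < c := div_pos h1ρ hρpos
    have hcinv : c * c⁻¹ = 1 := mul_inv_cancel₀ (ne_of_gt hcpos)
    have hcinvpos : 0 < c⁻¹ := inv_pos.mpr hcpos
    have hterm : ∀ i, ‖u i + v i‖ ^ 2 ≤ (1 + c) * ‖u i‖ ^ 2 + (1 + c⁻¹) * ‖v i‖ ^ 2 := by
      intro i
      have h1 : ‖u i + v i‖ ≤ ‖u i‖ + ‖v i‖ := norm_add_le _ _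
      have h2 : ‖u i + v i‖ ^ 2 ≤ (‖u i‖ + ‖v i‖) ^ 2 := by
        have := norm_nonneg (u i + v i)
        nlinarith [norm_nonneg (u i), norm_nonneg (v i)]
      nlinarith [sq_nonneg (c * ‖u i‖ - ‖v i‖), norm_nonneg (u i), norm_nonneg (v i),
        hcpos, hcinv, mul_pos hcpos hcpos]
    have hsum1 : ∑ i, ‖u i + v i‖ ^ 2
        ≤ (1 + c) * ∑ i, ‖u i‖ ^ 2 + (1 + c⁻¹) * ∑ i, ‖v i‖ ^ 2 := by
      rw [Finset.mul_sum, Finset.mul_sum, ← Finset.sum_add_distrib]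
      exact Finset.sum_le_sum fun i _ => hterm i
    have h1c : 1 + c = ρ⁻¹ := by
      rw [hc]; field_simp; ring
    have h2c : 1 + c⁻¹ = 1 / (1 - ρ) := by
      rw [hc, inv_div]; field_simp; ring
    have hstep : (1 + c) * ∑ i, ‖u i‖ ^ 2 ≤ ρ * ∑ i, ‖x i‖ ^ 2 := by
      rw [h1c]
      have h3 : ρ⁻¹ * ∑ i, ‖u i‖ ^ 2 ≤ ρ⁻¹ * (ρ ^ 2 * ∑ i, ‖x i‖ ^ 2) := by
        apply mul_le_mul_of_nonneg_left hU (le_of_lt (inv_pos.mpr hρpos))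
      have h4 : ρ⁻¹ * (ρ ^ 2 * ∑ i, ‖x i‖ ^ 2) = ρ * ∑ i, ‖x i‖ ^ 2 := by
        field_simp
      linarith [h3, h4.symm.le, h4.le]
    have hstep2 : (1 + c⁻¹) * ∑ i, ‖v i‖ ^ 2 ≤ 1 / (1 - ρ) * ∑ i, ‖e i‖ ^ 2 := by
      rw [h2c]
      apply mul_le_mul_of_nonneg_left hV
      positivity
    linarith [hsum1, hstep, hstep2]
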